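/- Let N, L, W, α = gcd(L,N), R = N/α be as above, and let ω be an R-th root of unity. Define x'[n] = ω^{⌊n/α⌋}·x[n] for n = 0,…,N−1 and w'[n] = ω^{⌈n/α⌉}·w[n] for n = 0,…,W−1. Then for every j, the section y_{jα}(x',w') equals ω^{j}·y_{jα}(x,w); in particular the Fourier intensity functions of all sections, and hence all phaseless periodic STFT measurements, are preserved. -/

import Mathlib

/-- Key division identity: if `0 < α` and `n ≤ k*α`, then
`⌊(k*α - n)/α⌋ + ⌈n/α⌉ = k`. -/
lemma mydiv (α k n : ℕ) (hα : 0 < α) (hn : n ≤ k * α) :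
    (k * α - n) / α + (n + α - 1) / α = k := by
  obtain ⟨q, r, hqr, hr⟩ : ∃ q r, n = α * q + r ∧ r < α :=
    ⟨n / α, n % α, (Nat.div_add_mod n α).symm, Nat.mod_lt n hα⟩
  have hcomm : α * q = q * α := mul_comm _ _
  rcases Nat.eq_zero_or_pos r with rfl | hr0
  · -- r = 0 : n = α*q
    have hqk : q ≤ k := by
      have : q * α ≤ k * α := by omega
      exact Nat.le_of_mul_le_mul_right this hα
    have e1 : k * α - n = α * (k - q) := by
      have h1 : α * (k - q) = (k - q) * α := mul_comm _ _
      have h2 : (k - q) * α = k * α - q * α := Nat.sub_mul _ _ _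
      omega
    have e2 : n + α - 1 = α * q + (α - 1) := by omega
    rw [e1, e2, Nat.mul_div_cancel_left _ hα, Nat.mul_add_div hα,
      Nat.div_eq_of_lt (by omega : α - 1 < α)]
    omega
  · -- r > 0
    have hqk : q + 1 ≤ k := by
      have h1 : α * q < α * k := by
        have : α * k = k * α := mul_comm _ _
        omega
      exact Nat.lt_of_mul_lt_mul_left h1
    have h4 : (q + 1) * α ≤ k * α := Nat.mul_le_mul_right α hqk
    have e2 : k * α - n = α * (k - (q + 1)) + (α - r) := by
      have h1 : α * (k - (q + 1)) = (k - (q + 1)) * α := mul_comm _ _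
      have h2 : (k - (q + 1)) * α = k * α - (q + 1) * α := Nat.sub_mul _ _ _
      have h3 : (q + 1) * α = α * q + α := by ring
      omega
    have e3 : n + α - 1 = α * (q + 1) + (r - 1) := by
      have h3 : α * (q + 1) = α * q + α := by ring
      omega
    rw [e2, e3, Nat.mul_add_div hα, Nat.mul_add_div hα,
      Nat.div_eq_of_lt (by omega : α - r < α),
      Nat.div_eq_of_lt (by omega : r - 1 < α)]
    omega

/-- the action of an `R`-th root of unity `ω`, modulating `x` by
`ω^⌊n/α⌋` and `w` by `ω^⌈n/α⌉`, multiplies the section `y_{jα}` by `ω^j`. -/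
theorem stmt_9 (N L W α R : ℕ) (hN : 0 < N) (hL : 0 < L)
    (hα : α = Nat.gcd L N) (hR : R = N / α) (hW : 0 < W) (hWN : W + α ≤ N)
    (ω : ℂ) (hω : ω ^ R = 1) (x w x' w' : ℕ → ℂ)
    (hx' : ∀ n, n < N → x' n = ω ^ (n / α) * x n)
    (hw' : ∀ n, n < W → w' n = ω ^ ((n + α - 1) / α) * w n) :
    ∀ j, j < R → ∀ n, n < W →
      x' (((j * α - n : ℤ) % (N : ℤ)).toNat) * w' n
        = ω ^ j * (x (((j * α - n : ℤ) % (N : ℤ)).toNat) * w n) := by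
  intro j hj n hn
  have hα0 : 0 < α := by rw [hα]; exact Nat.gcd_pos_of_pos_right L hN
  have hdvd : α ∣ N := by rw [hα]; exact Nat.gcd_dvd_right L N
  have hRα : R * α = N := by rw [hR]; exact Nat.div_mul_cancel hdvd
  have hnN : n < N := by omega
  have hjα : j * α + α ≤ N := by
    have h1 : (j + 1) * α ≤ R * α := Nat.mul_le_mul_right α hj
    have h2 : (j + 1) * α = j * α + α := by ring
    omega
  rcases le_or_gt n (j * α) with hle | hlt
  · -- no wrap-around: the index is `j*α - n`
    have hlt' : j * α - n < N := by omega
    have hcast : ((j : ℤ) * α - n) % N = ((j * α - n : ℕ) : ℤ) := by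
      have h1 : ((j : ℤ) * α - n) = ((j * α - n : ℕ) : ℤ) := by
        push_cast [hle]; ring
      rw [h1]
      exact Int.emod_eq_of_lt (Int.natCast_nonneg _) (by exact_mod_cast hlt')
    rw [hcast, Int.toNat_natCast, hx' _ hlt', hw' _ hn]
    have key := mydiv α j n hα0 hle
    have hpow : ω ^ ((j * α - n) / α) * ω ^ ((n + α - 1) / α) = ω ^ j := by
      rw [← pow_add, key]
    rw [← hpow]; ring
  · -- wrap-around: the index is `(j+R)*α - n`
    have hexp : (j + R) * α = j * α + R * α := by ring
    have hle2 : n ≤ (j + R) * α := by omega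
    have hm : (j + R) * α - n < N := by omega
    have hcast : ((j : ℤ) * α - n) % N = (((j + R) * α - n : ℕ) : ℤ) := by
      have h2 : ((R : ℤ)) * α = N := by exact_mod_cast hRα
      have h1 : ((j : ℤ) * α - n) = (((j + R) * α - n : ℕ) : ℤ) - N := by
        push_cast [hle2]; linear_combination (-1 : ℤ) * h2
      rw [h1, Int.sub_emod_right]
      exact Int.emod_eq_of_lt (Int.natCast_nonneg _) (by exact_mod_cast hm)
    rw [hcast, Int.toNat_natCast, hx' _ hm, hw' _ hn]
    have key := mydiv α (j + R) n hα0 hle2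
    have hpow : ω ^ (((j + R) * α - n) / α) * ω ^ ((n + α - 1) / α) = ω ^ j := by
      rw [← pow_add, key, pow_add, hω, mul_one]
    rw [← hpow]; ring
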